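/- The group W₁ has order 48 and is isomorphic (as a group) to GL₂(𝔽₃), the general linear group of 2×2 invertible matrices over the field with 3 elements. -/

import Mathlib

noncomputable section

abbrev Mat4 := Matrix (Fin 4) (Fin 4) ℂ

def s1 : Mat4 := !![0,1,0,0; 1,0,0,0; 0,0,1,0; 0,0,0,-1]
def s2 : Mat4 := !![1,0,0,0; 0,0,1,0; 0,1,0,0; 0,0,0,-1]
def s3 : Mat4 := !![-1,0,0,0; 0,1,0,0; 0,0,0,1; 0,0,1,0]

/-- The subgroup `W₁` of `GL₄(ℂ)` generated by `s₁, s₂, s₃`. -/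
def W1 : Subgroup (Matrix.GeneralLinearGroup (Fin 4) ℂ) :=
  Subgroup.closure {w | (w : Mat4) ∈ ({s1, s2, s3} : Set Mat4)}

namespace Stmt12Aux

set_option maxHeartbeats 4000000

abbrev M2 := Matrix (Fin 2) (Fin 2) (ZMod 3)
abbrev M4Z := Matrix (Fin 4) (Fin 4) ℤ
abbrev G2 := Matrix.GeneralLinearGroup (Fin 2) (ZMod 3)
abbrev U4 := (Matrix (Fin 4) (Fin 4) ℤ)ˣ

def G0 : ℕ → M4Z
  | 28 => !![1,0,0,0; 0,1,0,0; 0,0,1,0; 0,0,0,1]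
  | 12 => !![0,1,0,0; 1,0,0,0; 0,0,1,0; 0,0,0,-1]
  | 35 => !![1,0,0,0; 0,0,1,0; 0,1,0,0; 0,0,0,-1]
  | 55 => !![-1,0,0,0; 0,1,0,0; 0,0,0,1; 0,0,1,0]
  | 75 => !![0,0,1,0; 1,0,0,0; 0,1,0,0; 0,0,0,1]
  | 15 => !![0,1,0,0; -1,0,0,0; 0,0,0,1; 0,0,-1,0]
  | 17 => !![0,1,0,0; 0,0,1,0; 1,0,0,0; 0,0,0,1]
  | 59 => !![-1,0,0,0; 0,0,0,1; 0,1,0,0; 0,0,-1,0]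
  | 21 => !![0,-1,0,0; 1,0,0,0; 0,0,0,-1; 0,0,1,0]
  | 62 => !![-1,0,0,0; 0,0,1,0; 0,0,0,-1; 0,1,0,0]
  | 73 => !![0,0,1,0; 0,1,0,0; 1,0,0,0; 0,0,0,-1]
  | 51 => !![0,0,0,1; -1,0,0,0; 0,1,0,0; 0,0,1,0]
  | 29 => !![1,0,0,0; 0,-1,0,0; 0,0,0,-1; 0,0,-1,0]
  | 78 => !![0,0,1,0; -1,0,0,0; 0,0,0,-1; 0,-1,0,0]
  | 14 => !![0,1,0,0; 0,0,0,1; -1,0,0,0; 0,0,1,0]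
  | 25 => !![0,-1,0,0; 0,0,0,-1; 1,0,0,0; 0,0,-1,0]
  | 61 => !![-1,0,0,0; 0,0,0,-1; 0,0,1,0; 0,-1,0,0]
  | 39 => !![0,0,-1,0; 1,0,0,0; 0,0,0,1; 0,1,0,0]
  | 24 => !![0,-1,0,0; -1,0,0,0; 0,0,-1,0; 0,0,0,1]
  | 26 => !![0,-1,0,0; 0,0,1,0; 0,0,0,1; 1,0,0,0]
  | 32 => !![1,0,0,0; 0,0,0,1; 0,0,-1,0; 0,1,0,0]
  | 46 => !![0,0,0,1; 0,1,0,0; -1,0,0,0; 0,0,-1,0]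
  | 65 => !![0,0,0,-1; 0,-1,0,0; 1,0,0,0; 0,0,1,0]
  | 69 => !![0,0,0,-1; -1,0,0,0; 0,0,1,0; 0,1,0,0]
  | 31 => !![1,0,0,0; 0,0,-1,0; 0,0,0,1; 0,-1,0,0]
  | 56 => !![-1,0,0,0; 0,-1,0,0; 0,0,-1,0; 0,0,0,-1]
  | 74 => !![0,0,1,0; 0,-1,0,0; 0,0,0,1; -1,0,0,0]
  | 48 => !![0,0,0,1; 1,0,0,0; 0,0,-1,0; 0,-1,0,0]
  | 34 => !![1,0,0,0; 0,0,0,-1; 0,-1,0,0; 0,0,1,0]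
  | 79 => !![0,0,1,0; 0,0,0,-1; -1,0,0,0; 0,1,0,0]
  | 41 => !![0,0,-1,0; 0,0,0,1; 1,0,0,0; 0,-1,0,0]
  | 22 => !![0,-1,0,0; 0,0,-1,0; -1,0,0,0; 0,0,0,-1]
  | 23 => !![0,-1,0,0; 0,0,0,1; 0,0,1,0; -1,0,0,0]
  | 37 => !![0,0,-1,0; 0,1,0,0; 0,0,0,-1; 1,0,0,0]
  | 42 => !![0,0,-1,0; -1,0,0,0; 0,-1,0,0; 0,0,0,-1]
  | 16 => !![0,1,0,0; 0,0,0,-1; 0,0,-1,0; 1,0,0,0]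
  | 66 => !![0,0,0,-1; 1,0,0,0; 0,-1,0,0; 0,0,-1,0]
  | 71 => !![0,0,0,-1; 0,0,1,0; -1,0,0,0; 0,-1,0,0]
  | 49 => !![0,0,0,1; 0,0,-1,0; 1,0,0,0; 0,1,0,0]
  | 38 => !![0,0,-1,0; 0,-1,0,0; -1,0,0,0; 0,0,0,1]
  | 47 => !![0,0,0,1; 0,-1,0,0; 0,0,1,0; 1,0,0,0]
  | 13 => !![0,1,0,0; 0,0,-1,0; 0,0,0,-1; -1,0,0,0]
  | 58 => !![-1,0,0,0; 0,0,-1,0; 0,-1,0,0; 0,0,0,1]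
  | 64 => !![0,0,0,-1; 0,1,0,0; 0,0,-1,0; -1,0,0,0]
  | 77 => !![0,0,1,0; 0,0,0,1; 0,-1,0,0; 1,0,0,0]
  | 43 => !![0,0,-1,0; 0,0,0,-1; 0,1,0,0; -1,0,0,0]
  | 53 => !![0,0,0,1; 0,0,1,0; 0,-1,0,0; -1,0,0,0]
  | 67 => !![0,0,0,-1; 0,0,-1,0; 0,1,0,0; 1,0,0,0]
  | _ => 1

def W0 : ℕ → List (Fin 3)
  | 12 => [0]
  | 35 => [1]
  | 55 => [2]
  | 75 => [0,1]
  | 15 => [0,2]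
  | 17 => [1,0]
  | 59 => [1,2]
  | 21 => [2,0]
  | 62 => [2,1]
  | 73 => [0,1,0]
  | 51 => [0,1,2]
  | 29 => [0,2,0]
  | 78 => [0,2,1]
  | 14 => [1,0,2]
  | 25 => [1,2,0]
  | 61 => [1,2,1]
  | 39 => [2,0,1]
  | 24 => [2,0,2]
  | 26 => [2,1,0]
  | 32 => [2,1,2]
  | 46 => [0,1,0,2]
  | 65 => [0,1,2,0]
  | 69 => [0,1,2,1]
  | 31 => [0,2,0,1]
  | 56 => [0,2,0,2]
  | 74 => [0,2,1,0]
  | 48 => [0,2,1,2]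
  | 34 => [1,0,2,0]
  | 79 => [1,0,2,1]
  | 41 => [1,2,0,1]
  | 22 => [1,2,0,2]
  | 23 => [1,2,1,0]
  | 37 => [2,0,1,0]
  | 42 => [2,0,2,1]
  | 16 => [2,1,2,0]
  | 66 => [0,1,0,2,0]
  | 71 => [0,1,0,2,1]
  | 49 => [0,1,2,0,1]
  | 38 => [0,1,2,0,2]
  | 47 => [0,1,2,1,0]
  | 13 => [0,2,0,1,0]
  | 58 => [0,2,0,2,1]
  | 64 => [0,2,1,2,0]
  | 77 => [1,0,2,1,0]
  | 43 => [1,2,0,1,0]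
  | 53 => [0,1,0,2,1,0]
  | 67 => [0,1,2,0,1,0]
  | _ => []

def keys : List M2 := [
  !![1,0;0,1],
  !![0,1;1,0],
  !![1,0;2,2],
  !![2,0;0,1],
  !![2,2;1,0],
  !![0,1;2,0],
  !![0,1;2,2],
  !![2,0;1,2],
  !![0,2;1,0],
  !![2,0;2,2],
  !![2,2;0,1],
  !![1,2;2,0],
  !![1,0;0,2],
  !![2,2;2,0],
  !![0,1;1,2],
  !![0,2;2,1],
  !![2,0;2,1],
  !![1,1;1,0],
  !![0,2;2,0],
  !![0,2;2,2],
  !![1,0;1,2],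
  !![1,2;0,1],
  !![2,1;0,2],
  !![2,1;2,0],
  !![1,0;1,1],
  !![2,0;0,2],
  !![2,2;0,2],
  !![1,2;1,0],
  !![1,0;2,1],
  !![2,2;2,1],
  !![1,1;1,2],
  !![0,2;1,1],
  !![0,2;1,2],
  !![1,1;0,1],
  !![1,1;2,0],
  !![0,1;2,1],
  !![2,1;1,0],
  !![2,1;2,2],
  !![1,2;1,1],
  !![1,1;0,2],
  !![1,2;0,2],
  !![0,1;1,1],
  !![2,0;1,1],
  !![2,1;0,1],
  !![2,2;1,2],
  !![1,1;2,1],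
  !![1,2;2,2],
  !![2,1;1,1]]

def enc (m : M2) : ℕ := 27 * (m 0 0).val + 9 * (m 0 1).val + 3 * (m 1 0).val + (m 1 1).val

def g (m : M2) : M4Z := G0 (enc m)

def word (m : M2) : List (Fin 3) := W0 (enc m)

def mw : Fin 3 → M2 := ![!![0,1;1,0], !![1,0;2,2], !![2,0;0,1]]

def tz : Fin 3 → M4Z :=
  ![!![0,1,0,0; 1,0,0,0; 0,0,1,0; 0,0,0,-1],
    !![1,0,0,0; 0,0,1,0; 0,1,0,0; 0,0,0,-1],
    !![-1,0,0,0; 0,1,0,0; 0,0,0,1; 0,0,1,0]]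

lemma hdet : ∀ m : M2, m ∈ keys ∨ m 0 0 * m 1 1 - m 0 1 * m 1 0 = 0 := by decide

lemma hmulgen : ∀ m ∈ keys, ∀ i : Fin 3, g (m * mw i) = g m * g (mw i) := by decide

lemma hword : ∀ m ∈ keys, ((word m).map mw).prod = m := by decide

lemma hone : g 1 = 1 := by decide

lemma hker : ∀ m ∈ keys, g m = 1 → m = 1 := by decide

lemma hgen : ∀ i : Fin 3, g (mw i) = tz i := by decide

lemma hinv2 : ∀ i : Fin 3, mw i * mw i = 1 := by decide

lemma hinv4 : ∀ i : Fin 3, tz i * tz i = 1 := by decide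

def uf (i : Fin 3) : G2 := ⟨mw i, mw i, hinv2 i, hinv2 i⟩

def tU (i : Fin 3) : U4 := ⟨tz i, tz i, hinv4 i, hinv4 i⟩

def wprod (w : List (Fin 3)) : G2 := (w.map uf).prod

lemma val_wprod (w : List (Fin 3)) : (wprod w).val = (w.map mw).prod := by
  have : (Units.coeHom M2) ((w.map uf).prod) = ((w.map uf).map (Units.coeHom M2)).prod :=
    map_list_prod _ _
  simpa [wprod, List.map_map, Function.comp_def, uf] using this

local instance : Fact (Nat.Prime 3) := ⟨by norm_num⟩

lemma hkeys (u : G2) : (u : M2) ∈ keys := by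
  rcases hdet u.val with h | h
  · exact h
  · exfalso
    have hu : IsUnit (Matrix.det u.val) := (Matrix.isUnit_iff_isUnit_det _).mp ⟨u, rfl⟩
    rw [Matrix.det_fin_two, h] at hu
    simpa using hu

lemma exists_word (u : G2) : u = wprod (word u.val) := by
  apply Units.ext
  rw [val_wprod, hword _ (hkeys u)]

lemma hmul_right (u : G2) (i : Fin 3) : g (u.val * mw i) = g u.val * g (mw i) :=
  hmulgen _ (hkeys u) i

lemma wprod_append (w : List (Fin 3)) (i : Fin 3) :
    wprod (w ++ [i]) = wprod w * uf i := by
  simp [wprod]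

lemma keyP (u v : G2) : g (u.val * v.val) = g u.val * g v.val := by
  obtain ⟨w, rfl⟩ : ∃ w, v = wprod w := ⟨_, exists_word v⟩
  induction w using List.reverseRecOn with
  | nil =>
      have h1 : (wprod []).val = (1 : M2) := rfl
      rw [h1, mul_one, hone, mul_one]
  | append_singleton w i ih =>
      rw [wprod_append]
      have e1 : u.val * (wprod w * uf i).val = (u * wprod w).val * mw i := by
        rw [Units.val_mul, Units.val_mul, mul_assoc]; rfl
      have e2 : (wprod w * uf i).val = (wprod w).val * mw i := by
        rw [Units.val_mul]; rfl
      rw [e1, hmul_right (u * wprod w) i, Units.val_mul, ih, e2,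
        hmul_right (wprod w) i, mul_assoc]

def ghom : G2 →* U4 :=
  MonoidHom.mk'
    (fun u => ⟨g u.val, g (↑u⁻¹ : M2),
      by rw [← keyP u u⁻¹, Units.mul_inv, hone],
      by rw [← keyP u⁻¹ u, Units.inv_mul, hone]⟩)
    (fun u v => Units.ext (keyP u v))

lemma ghom_val (u : G2) : (ghom u).val = g u.val := rfl

lemma ghom_inj : Function.Injective ghom := by
  refine (injective_iff_map_eq_one ghom).mpr fun u h => ?_
  have h1 : g u.val = 1 := congrArg Units.val h
  exact Units.ext (hker _ (hkeys u) h1)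

def Hz : Subgroup U4 := Subgroup.closure {tU 0, tU 1, tU 2}

lemma ghom_uf (i : Fin 3) : ghom (uf i) = tU i := Units.ext (hgen i)

lemma range_eq : ghom.range = Hz := by
  apply le_antisymm
  · rintro x ⟨u, rfl⟩
    rw [exists_word u, wprod, map_list_prod]
    apply Subgroup.list_prod_mem
    intro x hx
    rw [List.map_map, List.mem_map] at hx
    obtain ⟨i, -, rfl⟩ := hx
    have : (ghom ∘ uf) i = tU i := ghom_uf i
    rw [this]
    fin_cases i <;>
      exact Subgroup.subset_closure (by simp [Hz])
  · rw [Hz, Subgroup.closure_le]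
    rintro x hx
    simp only [Set.mem_insert_iff, Set.mem_singleton_iff] at hx
    rcases hx with rfl | rfl | rfl
    · exact ⟨uf 0, ghom_uf 0⟩
    · exact ⟨uf 1, ghom_uf 1⟩
    · exact ⟨uf 2, ghom_uf 2⟩

def phi : U4 →* Matrix.GeneralLinearGroup (Fin 4) ℂ :=
  Units.map ((Int.castRingHom ℂ).mapMatrix).toMonoidHom

lemma phi_inj : Function.Injective phi := by
  intro u v h
  have h1 : (phi u).val = (phi v).val := congrArg Units.val h
  apply Units.ext
  ext i j
  have h2 : ((u.val i j : ℤ) : ℂ) = ((v.val i j : ℤ) : ℂ) := congrFun (congrFun h1 i) j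
  exact_mod_cast h2

def sC : Fin 3 → Mat4 := ![s1, s2, s3]

lemma phi_val (i : Fin 3) : (phi (tU i)).val = sC i := by
  fin_cases i <;>
  · ext a b
    fin_cases a <;> fin_cases b <;>
      simp [phi, tU, tz, sC, s1, s2, s3, Matrix.map_apply, Matrix.vecHead, Matrix.vecTail]

lemma W1_eq : W1 = Hz.map phi := by
  rw [Hz, MonoidHom.map_closure, W1]
  congr 1
  ext w
  simp only [Set.mem_image, Set.mem_insert_iff, Set.mem_singleton_iff, Set.mem_setOf_eq]
  constructor
  · rintro (h | h | h)
    · exact ⟨tU 0, Or.inl rfl, Units.ext (by rw [phi_val]; exact h.symm)⟩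
    · exact ⟨tU 1, Or.inr (Or.inl rfl), Units.ext (by rw [phi_val]; exact h.symm)⟩
    · exact ⟨tU 2, Or.inr (Or.inr rfl), Units.ext (by rw [phi_val]; exact h.symm)⟩
  · rintro ⟨x, (rfl | rfl | rfl), rfl⟩
    · exact Or.inl (phi_val 0)
    · exact Or.inr (Or.inl (phi_val 1))
    · exact Or.inr (Or.inr (phi_val 2))

lemma card48 : Nat.card G2 = 48 := by
  rw [Matrix.card_GL_field]
  simp [Fin.prod_univ_two, ZMod.card]

def finalEquiv : W1 ≃* G2 :=
  ((MulEquiv.subgroupCongr W1_eq).trans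
    (Subgroup.equivMapOfInjective Hz phi phi_inj).symm).trans
    ((MulEquiv.subgroupCongr range_eq).symm.trans
      (MonoidHom.ofInjective ghom_inj).symm)

end Stmt12Aux

/-- `W₁` has order 48 and is isomorphic to `GL₂(𝔽₃)`. -/
theorem stmt_12 :
    Nat.card W1 = 48 ∧
    Nonempty (W1 ≃* Matrix.GeneralLinearGroup (Fin 2) (ZMod 3)) := by
  constructor
  · rw [Nat.card_congr Stmt12Aux.finalEquiv.toEquiv]
    exact Stmt12Aux.card48
  · exact ⟨Stmt12Aux.finalEquiv⟩
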